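/- arXiv:2109.10313 — 3 statements merged into one kernel-verified Lean document; each statement's English description precedes it below -/
import Mathlib

section
/- Let p be a real number with 0 < p < 1 and p ≠ 1/2, set q = 1 - p, and let x, k be integers with 0 < x < k. Let X₁, X₂, … be i.i.d. random variables on a probability space with P(Xₙ = 1) = p and P(Xₙ = -1) = q, and let Sₙ be the simple random walk defined by S₀ = x and Sₙ = Sₙ₋₁ + Xₙ. Then the probability that the walk (Sₙ) reaches 0 strictly before reaching k equals (1 - (p/q)^(k-x)) / (1 - (p/q)^k). -/
open MeasureTheory ProbabilityTheory ENNReal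

namespace GamblersRuinAux

def eps (b : Bool) : ℤ := if b then 1 else -1

def lsum (l : List Bool) : ℤ := (l.map eps).sum

def okb (k : ℤ) : ℤ → List Bool → Bool
  | y, [] => y == 0
  | y, b :: l => !(y == 0) && !(y == k) && okb k (y + eps b) l

lemma okb_nil (k y : ℤ) : okb k y ([] : List Bool) = (y == 0) := rfl

lemma okb_cons_iff (k y : ℤ) (b : Bool) (l : List Bool) :
    okb k y (b :: l) = true ↔ y ≠ 0 ∧ y ≠ k ∧ okb k (y + eps b) l = true := by
  simp [okb, and_assoc]

lemma okb_prefix (k : ℤ) : ∀ (l : List Bool) (y : ℤ) (l' : List Bool),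
    okb k y l = true → okb k y l' = true → l <+: l' → l = l' := by
  intro l
  induction l with
  | nil =>
    intro y l' h1 h2 _
    cases l' with
    | nil => rfl
    | cons b t =>
      rw [okb_nil, beq_iff_eq] at h1
      rw [okb_cons_iff] at h2
      exact absurd h1 h2.1
  | cons b t ih =>
    intro y l' h1 h2 hpre
    cases l' with
    | nil => simpa using hpre.length_le
    | cons b' t' =>
      obtain ⟨r, hr⟩ := hpre
      injection hr with hb hr
      subst hb
      rw [okb_cons_iff] at h1 h2
      rw [ih _ _ h1.2.2 h2.2.2 ⟨r, hr⟩]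

lemma okb_iff (k : ℤ) : ∀ (l : List Bool) (y : ℤ),
    okb k y l = true ↔ (y + lsum l = 0 ∧
      ∀ m < l.length, y + lsum (l.take m) ≠ 0 ∧ y + lsum (l.take m) ≠ k) := by
  intro l
  induction l with
  | nil => intro y; simp [okb_nil, lsum]
  | cons b t ih =>
    intro y
    rw [okb_cons_iff, ih]
    constructor
    · rintro ⟨hy0, hyk, hsum, hall⟩
      refine ⟨by rw [show lsum (b :: t) = eps b + lsum t from by simp [lsum]]; omega, ?_⟩
      intro m hm
      match m with
      | 0 => simpa [lsum] using ⟨hy0, hyk⟩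
      | Nat.succ j =>
        have hj : j < t.length := by simpa using hm
        have := hall j hj
        rw [List.take_succ_cons]
        rw [show lsum (b :: t.take j) = eps b + lsum (t.take j) from by simp [lsum]]
        omega
    · rintro ⟨hsum, hall⟩
      have h0 := hall 0 (by simp)
      simp only [List.take_zero, lsum, List.map_nil, List.sum_nil, add_zero] at h0
      have hsum' : lsum (b :: t) = eps b + lsum t := by simp [lsum]
      refine ⟨h0.1, h0.2, by omega, ?_⟩
      intro j hj
      have := hall (j + 1) (by simpa using Nat.succ_lt_succ hj)
      rw [List.take_succ_cons,
        show lsum (b :: t.take j) = eps b + lsum (t.take j) from by simp [lsum]] at this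
      omega

lemma lsum_take_succ : ∀ (l : List Bool) (m : ℕ), m < l.length →
    lsum (l.take (m + 1)) = lsum (l.take m) + eps (l.getD m false) := by
  intro l
  induction l with
  | nil => intro m hm; simp at hm
  | cons b t ih =>
    intro m hm
    match m with
    | 0 => simp [lsum]
    | Nat.succ j =>
      have hj : j < t.length := by simpa using hm
      rw [List.take_succ_cons, List.take_succ_cons,
        show ∀ u, lsum (b :: u) = eps b + lsum u from fun u => by simp [lsum],
        show ∀ u, lsum (b :: u) = eps b + lsum u from fun u => by simp [lsum],
        ih j hj, List.getD_cons_succ]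
      ring

noncomputable def wt (p q : ℝ) (b : Bool) : ℝ≥0∞ :=
  if b then ENNReal.ofReal p else ENNReal.ofReal q

noncomputable def wl (p q : ℝ) (l : List Bool) : ℝ≥0∞ := (l.map (wt p q)).prod

noncomputable def f (p q : ℝ) (k y : ℤ) : ℝ≥0∞ :=
  ∑' l : List Bool, if okb k y l then wl p q l else 0

lemma wl_eq_prod (p q : ℝ) (l : List Bool) :
    wl p q l = ∏ i ∈ Finset.range l.length, wt p q (l.getD i false) := by
  induction l with
  | nil => simp [wl]
  | cons b t ih =>
    rw [wl, List.map_cons, List.prod_cons, List.length_cons, Finset.prod_range_succ']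
    simp only [List.getD_cons_succ, List.getD_cons_zero]
    rw [← wl, ih, mul_comm]

lemma f_zero (p q : ℝ) (k : ℤ) : f p q k 0 = 1 := by
  rw [f, tsum_eq_single ([] : List Bool)]
  · simp [okb, wl]
  · intro l hl
    cases l with
    | nil => exact absurd rfl hl
    | cons b t => simp [okb]

lemma f_k (p q : ℝ) (k : ℤ) (hk : k ≠ 0) : f p q k k = 0 := by
  rw [f, ENNReal.tsum_eq_zero]
  intro l
  cases l with
  | nil => simp [okb, hk]
  | cons b t => simp [okb]

lemma f_rec (p q : ℝ) (k y : ℤ) (hy0 : y ≠ 0) (hyk : y ≠ k) :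
    f p q k y = ENNReal.ofReal q * f p q k (y - 1) + ENNReal.ofReal p * f p q k (y + 1) := by
  have hinj : Function.Injective (fun bp : Bool × List Bool => bp.1 :: bp.2) := by
    rintro ⟨a, s⟩ ⟨a', s'⟩ h
    simp only [List.cons.injEq] at h
    simp [h.1, h.2]
  have hsupp : Function.support (fun l : List Bool => if okb k y l then wl p q l else 0) ⊆
      Set.range (fun bp : Bool × List Bool => bp.1 :: bp.2) := by
    intro l hl
    cases l with
    | nil => exact absurd (by simp [okb, hy0]) hl
    | cons b t => exact ⟨(b, t), rfl⟩
  have key : ∀ (b : Bool) (l : List Bool),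
      (if okb k y (b :: l) then wl p q (b :: l) else 0) =
        wt p q b * (if okb k (y + eps b) l then wl p q l else 0) := by
    intro b l
    by_cases h : okb k (y + eps b) l = true
    · rw [if_pos (by rw [okb_cons_iff]; exact ⟨hy0, hyk, h⟩), if_pos h, wl, List.map_cons,
        List.prod_cons]; rfl
    · rw [if_neg (by rw [okb_cons_iff]; tauto), if_neg h, mul_zero]
  rw [f, ← hinj.tsum_eq hsupp, ENNReal.tsum_prod']
  simp only [key]
  rw [tsum_bool, ENNReal.tsum_mul_left, ENNReal.tsum_mul_left]
  rw [show y + eps false = y - 1 by simp [eps, sub_eq_add_neg],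
    show y + eps true = y + 1 by simp [eps]]
  rfl

lemma solve (p q : ℝ) (hp0 : 0 < p) (hp1 : p < 1) (hp : p ≠ 1 / 2) (hq : q = 1 - p)
    (x k : ℤ) (hx : 0 < x) (hxk : x < k) (F : ℤ → ℝ)
    (hF0 : F 0 = 1) (hFk : F k = 0)
    (hrec : ∀ y : ℤ, y ≠ 0 → y ≠ k → F y = q * F (y - 1) + p * F (y + 1)) :
    F x = (1 - (p / q) ^ (k - x)) / (1 - (p / q) ^ k) := by
  have hq0 : 0 < q := by rw [hq]; linarith
  set ρ := q / p with hρdef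
  have hρ0 : 0 < ρ := div_pos hq0 hp0
  have hρ1 : ρ ≠ 1 := by
    rw [hρdef, Ne, div_eq_one_iff_eq hp0.ne']
    intro h; apply hp; rw [hq] at h; linarith
  have hstep : ∀ y : ℤ, y ≠ 0 → y ≠ k → F (y + 1) - F y = ρ * (F y - F (y - 1)) := by
    intro y h0 hk
    have h := hrec y h0 hk
    rw [hρdef, div_mul_eq_mul_div, eq_div_iff hp0.ne']
    linear_combination -h - F y * hq
  set D : ℕ → ℝ := fun j => F ((j : ℤ) + 1) - F (j : ℤ) with hDdef
  have hDpow : ∀ j : ℕ, (j : ℤ) < k → D j = ρ ^ j * D 0 := by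
    intro j
    induction j with
    | zero => intro _; simp
    | succ i ih =>
      intro hj
      have hik : ((i : ℤ) + 1) ≠ k := by push_cast at hj ⊢; omega
      have hi0 : ((i : ℤ) + 1) ≠ 0 := by omega
      have hs := hstep ((i : ℤ) + 1) hi0 hik
      have : D (i + 1) = ρ * D i := by
        rw [hDdef]; push_cast; simpa using hs
      rw [this, ih (by push_cast at hj ⊢; omega), pow_succ]
      ring
  have htel : ∀ n : ℕ, F (n : ℤ) = F 0 + ∑ j ∈ Finset.range n, D j := by
    intro n
    induction n with
    | zero => simp
    | succ i ih =>
      rw [Finset.sum_range_succ, ← add_assoc, ← ih, hDdef]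
      push_cast
      ring
  set G : ℕ → ℝ := fun n => (ρ ^ n - 1) / (ρ - 1) with hGdef
  have hFG : ∀ n : ℕ, (n : ℤ) ≤ k → F (n : ℤ) = 1 + D 0 * G n := by
    intro n hn
    rw [htel n, hF0]
    congr 1
    have : ∀ j ∈ Finset.range n, D j = D 0 * ρ ^ j := by
      intro j hj
      rw [hDpow j (by have := Finset.mem_range.1 hj; omega)]; ring
    rw [Finset.sum_congr rfl this, ← Finset.mul_sum, geom_sum_eq hρ1]
  have hk0 : (0:ℤ) ≤ k := by omega
  have hx0 : (0:ℤ) ≤ x := by omega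
  have hck : ((k.toNat : ℤ)) = k := Int.toNat_of_nonneg hk0
  have hcx : ((x.toNat : ℤ)) = x := Int.toNat_of_nonneg hx0
  have hρpow_ne : ∀ n : ℕ, n ≠ 0 → ρ ^ n ≠ 1 := by
    intro n hn
    rcases lt_or_gt_of_ne hρ1 with h | h
    · exact ne_of_lt (pow_lt_one₀ hρ0.le h hn)
    · exact ne_of_gt (one_lt_pow₀ h hn)
  have hkt0 : k.toNat ≠ 0 := by omega
  have hGk : G k.toNat ≠ 0 := by
    rw [hGdef]
    apply div_ne_zero _ (sub_ne_zero.2 hρ1)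
    exact sub_ne_zero.2 (hρpow_ne _ hkt0)
  have hFk' : 1 + D 0 * G k.toNat = 0 := by
    rw [← hFG k.toNat (by omega), hck, hFk]
  have hD0 : D 0 = -1 / G k.toNat := by
    field_simp
    linarith
  have hFx : F x = 1 - G x.toNat / G k.toNat := by
    have h := hFG x.toNat (by omega)
    rw [hcx] at h
    rw [h, hD0]
    ring
  have hρne : ρ ≠ 0 := hρ0.ne'
  have hax : x.toNat ≤ k.toNat := by omega
  have hzkx : (p / q) ^ (k - x) = (p / q) ^ (k.toNat - x.toNat : ℕ) := by
    rw [← zpow_natCast]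
    congr 1
    omega
  have hzk : (p / q) ^ k = ((p / q) ^ (k.toNat : ℕ) : ℝ) := by
    rw [← zpow_natCast]
    congr 1
    omega
  have hr : p / q = ρ⁻¹ := by rw [hρdef]; field_simp
  have h1 : (p / q) ^ (k.toNat - x.toNat : ℕ) = ρ ^ x.toNat / ρ ^ k.toNat := by
    rw [hr, inv_pow, pow_sub₀ _ hρne hax]
    field_simp
  have h2 : ((p / q) ^ (k.toNat : ℕ) : ℝ) = 1 / ρ ^ k.toNat := by
    rw [hr, inv_pow]; field_simp
  rw [hzkx, hzk, h1, h2, hFx, hGdef]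
  have hρk1 : ρ ^ k.toNat - 1 ≠ 0 := sub_ne_zero.2 (hρpow_ne _ hkt0)
  have hρkne : ρ ^ k.toNat ≠ 0 := pow_ne_zero _ hρne
  have hρ1' : ρ - 1 ≠ 0 := sub_ne_zero.2 hρ1
  field_simp
  ring

def cyl {Ω : Type*} (X : ℕ → Ω → ℤ) (l : List Bool) : Set Ω :=
  ⋂ i ∈ Finset.range l.length, (X (i + 1)) ⁻¹' {eps (l.getD i false)}

lemma mem_cyl {Ω : Type*} {X : ℕ → Ω → ℤ} {l : List Bool} {ω : Ω} :
    ω ∈ cyl X l ↔ ∀ i < l.length, X (i + 1) ω = eps (l.getD i false) := by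
  simp [cyl]

lemma measurableSet_cyl {Ω : Type*} [MeasurableSpace Ω] {X : ℕ → Ω → ℤ}
    (hX : ∀ n, Measurable (X n)) (l : List Bool) : MeasurableSet (cyl X l) :=
  MeasurableSet.biInter (Finset.range l.length).countable_toSet
    fun i _ => hX (i + 1) (measurableSet_singleton _)

lemma meas_cyl {Ω : Type*} [MeasurableSpace Ω] (P : Measure Ω) [IsProbabilityMeasure P]
    (p q : ℝ)
    (X : ℕ → Ω → ℤ)
    (hindep : iIndepFun X P)
    (hXup : ∀ n, P {ω | X n ω = 1} = ENNReal.ofReal p)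
    (hXdown : ∀ n, P {ω | X n ω = -1} = ENNReal.ofReal q)
    (l : List Bool) :
    P (cyl X l) = wl p q l := by
  classical
  set n := l.length with hn
  set s : ℕ → Set Ω := fun j => X j ⁻¹' {eps (l.getD (j - 1) false)} with hs
  have hmeas : ∀ j ∈ (Finset.range n).image Nat.succ,
      MeasurableSet[(inferInstance : MeasurableSpace ℤ).comap (X j)] (s j) :=
    fun j _ => ⟨{eps (l.getD (j - 1) false)}, measurableSet_singleton _, rfl⟩
  have hkey := hindep.meas_biInter (S := (Finset.range n).image Nat.succ) hmeas
  have hset : (⋂ j ∈ (Finset.range n).image Nat.succ, s j) = cyl X l := by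
    rw [cyl]
    ext ω
    simp only [Set.mem_iInter, Finset.mem_image, Finset.mem_range]
    constructor
    · intro h i hi
      have := h (i + 1) ⟨i, hi, rfl⟩
      simpa [hs] using this
    · rintro h j ⟨i, hi, rfl⟩
      simpa [hs] using h i hi
  have hprod : ∏ j ∈ (Finset.range n).image Nat.succ, P (s j)
      = ∏ i ∈ Finset.range n, P (s (i + 1)) :=
    Finset.prod_image (fun a _ b _ h => Nat.succ_injective h)
  rw [hset] at hkey
  rw [hkey, hprod, wl_eq_prod]
  apply Finset.prod_congr rfl
  intro i _
  have hsi : s (i + 1) = X (i + 1) ⁻¹' {eps (l.getD i false)} := by simp [hs]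
  rw [hsi]
  cases hb : l.getD i false
  · rw [show eps false = -1 from rfl,
      show X (i+1) ⁻¹' {(-1 : ℤ)} = {ω | X (i+1) ω = -1} from rfl, hXdown]
    rfl
  · rw [show eps true = 1 from rfl,
      show X (i+1) ⁻¹' {(1 : ℤ)} = {ω | X (i+1) ω = 1} from rfl, hXup]
    rfl

lemma sum_eq_lsum_take {Ω : Type*} {X : ℕ → Ω → ℤ} {l : List Bool} {ω : Ω}
    (h : ω ∈ cyl X l) : ∀ m, m ≤ l.length →
    (∑ i ∈ Finset.range m, X (i + 1) ω) = lsum (l.take m) := by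
  intro m
  induction m with
  | zero => intro _; simp [lsum]
  | succ j ih =>
    intro hm
    have hj : j < l.length := by omega
    rw [Finset.sum_range_succ, ih (by omega), mem_cyl.mp h j hj, lsum_take_succ l j hj]

lemma cyl_unique {Ω : Type*} {X : ℕ → Ω → ℤ} {k y : ℤ} {l l' : List Bool} {ω : Ω}
    (hl : okb k y l = true) (hl' : okb k y l' = true)
    (h : ω ∈ cyl X l) (h' : ω ∈ cyl X l') : l = l' := by
  have hagree : ∀ (a b : List Bool), ω ∈ cyl X a → ω ∈ cyl X b →
      a.length ≤ b.length → a <+: b := by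
    intro a b ha hb hab
    have hEq : a = b.take a.length := by
      apply List.ext_getElem
      · simp [hab]
      · intro i h1 h2
        have hia : i < a.length := h1
        have hib : i < b.length := by omega
        have e1 := mem_cyl.mp ha i hia
        have e2 := mem_cyl.mp hb i hib
        have heps : eps (a.getD i false) = eps (b.getD i false) := by rw [← e1, ← e2]
        have hD : a.getD i false = b.getD i false := by
          by_contra hne
          cases hA : a.getD i false <;> cases hB : b.getD i false <;>
            rw [hA, hB] at heps hne <;> simp [eps] at heps hne
        rw [List.getElem_take]
        rw [List.getD_eq_getElem a false hia, List.getD_eq_getElem b false hib] at hD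
        exact hD
    rw [hEq]
    exact List.take_prefix _ _
  rcases le_total l.length l'.length with hle | hle
  · exact okb_prefix k l y l' hl hl' (hagree l l' h h' hle)
  · exact (okb_prefix k l' y l hl' hl (hagree l' l h' h hle)).symm

lemma meas_eq_f {Ω : Type*} [MeasurableSpace Ω] (P : Measure Ω) [IsProbabilityMeasure P]
    (p q : ℝ) (hp0 : 0 ≤ p) (hq0 : 0 ≤ q) (hpq : p + q = 1) (k : ℤ) (hk : k ≠ 0)
    (X : ℕ → Ω → ℤ) (hXmeas : ∀ n, Measurable (X n))
    (hindep : iIndepFun X P)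
    (hXup : ∀ n, P {ω | X n ω = 1} = ENNReal.ofReal p)
    (hXdown : ∀ n, P {ω | X n ω = -1} = ENNReal.ofReal q)
    (y : ℤ) :
    P {ω | ∃ n : ℕ, y + (∑ i ∈ Finset.range n, X (i + 1) ω) = 0 ∧
        ∀ m ≤ n, y + (∑ i ∈ Finset.range m, X (i + 1) ω) ≠ k} = f p q k y := by
  classical
  set N : Set Ω := ⋃ i : ℕ, ({ω | X (i + 1) ω = 1} ∪ {ω | X (i + 1) ω = -1})ᶜ with hNdef
  have hN : P N = 0 := by
    apply measure_iUnion_null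
    intro i
    have hmeasA : MeasurableSet {ω | X (i + 1) ω = 1} :=
      hXmeas (i + 1) (measurableSet_singleton 1)
    have hmeasB : MeasurableSet {ω | X (i + 1) ω = -1} :=
      hXmeas (i + 1) (measurableSet_singleton (-1))
    have hdisj : Disjoint {ω | X (i + 1) ω = 1} {ω | X (i + 1) ω = -1} := by
      rw [Set.disjoint_left]
      intro ω h1 h2
      simp only [Set.mem_setOf_eq] at h1 h2
      omega
    have hu : P ({ω | X (i + 1) ω = 1} ∪ {ω | X (i + 1) ω = -1}) = 1 := by
      rw [measure_union hdisj hmeasB, hXup, hXdown, ← ENNReal.ofReal_add hp0 hq0, hpq,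
        ENNReal.ofReal_one]
    rw [measure_compl (hmeasA.union hmeasB) (measure_ne_top _ _), hu, measure_univ, tsub_self]
  set U : Set Ω := ⋃ l : ↑{l : List Bool | okb k y l = true}, cyl X l.1 with hUdef
  have hEU : {ω | ∃ n : ℕ, y + (∑ i ∈ Finset.range n, X (i + 1) ω) = 0 ∧
      ∀ m ≤ n, y + (∑ i ∈ Finset.range m, X (i + 1) ω) ≠ k} \ N = U \ N := by
    ext ω
    simp only [Set.mem_diff, Set.mem_setOf_eq]
    constructor
    · rintro ⟨⟨n, hn0, hnk⟩, hωN⟩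
      refine ⟨?_, hωN⟩
      have hXpm : ∀ i : ℕ, X (i + 1) ω = 1 ∨ X (i + 1) ω = -1 := by
        intro i
        have h := hωN
        simp only [hNdef, Set.mem_iUnion, Set.mem_compl_iff, not_exists, not_not,
          Set.mem_union, Set.mem_setOf_eq] at h
        exact h i
      have hex : ∃ m : ℕ, y + (∑ i ∈ Finset.range m, X (i + 1) ω) = 0 := ⟨n, hn0⟩
      set n₀ := Nat.find hex with hn₀def
      have hfind : y + (∑ i ∈ Finset.range n₀, X (i + 1) ω) = 0 := Nat.find_spec hex
      have hmin : ∀ m, m < n₀ → y + (∑ i ∈ Finset.range m, X (i + 1) ω) ≠ 0 :=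
        fun m hm => Nat.find_min hex hm
      have hn₀n : n₀ ≤ n := Nat.find_min' hex hn0
      set l : List Bool := List.ofFn (fun i : Fin n₀ => decide (X (i.1 + 1) ω = 1)) with hldef
      have hlen : l.length = n₀ := by simp [hldef]
      have hgetD : ∀ i, i < n₀ → l.getD i false = decide (X (i + 1) ω = 1) := by
        intro i hi
        rw [List.getD_eq_getElem l false (by omega)]
        simp [hldef]
      have hcyl : ω ∈ cyl X l := by
        rw [mem_cyl]
        intro i hi
        rw [hlen] at hi
        rw [hgetD i hi]
        rcases hXpm i with h | h
        · simp [h, eps]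
        · rw [h]
          have hne : ¬(X (i + 1) ω = 1) := by omega
          simp [hne, eps, h]
      have hT : ∀ m, m ≤ n₀ → (∑ i ∈ Finset.range m, X (i + 1) ω) = lsum (l.take m) :=
        fun m hm => sum_eq_lsum_take hcyl m (by omega)
      have htake : l.take n₀ = l := by rw [← hlen]; exact List.take_length
      have hok : okb k y l = true := by
        rw [okb_iff]
        constructor
        · rw [show lsum l = lsum (l.take n₀) from by rw [htake], ← hT n₀ le_rfl]
          exact hfind
        · intro m hm
          rw [hlen] at hm
          rw [← hT m (le_of_lt hm)]
          exact ⟨hmin m hm, hnk m (le_trans (le_of_lt hm) hn₀n)⟩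
      exact Set.mem_iUnion.2 ⟨⟨l, hok⟩, hcyl⟩
    · rintro ⟨hU, hωN⟩
      refine ⟨?_, hωN⟩
      obtain ⟨⟨l, hok⟩, hcyl⟩ := Set.mem_iUnion.1 hU
      replace hok : okb k y l = true := hok
      rw [okb_iff] at hok
      obtain ⟨hsum, hall⟩ := hok
      have hT : ∀ m, m ≤ l.length → (∑ i ∈ Finset.range m, X (i + 1) ω) = lsum (l.take m) :=
        fun m hm => sum_eq_lsum_take hcyl m hm
      refine ⟨l.length, ?_, ?_⟩
      · rw [hT _ le_rfl, List.take_length]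
        exact hsum
      · intro m hm
        rcases lt_or_eq_of_le hm with h | h
        · rw [hT m hm]
          exact (hall m h).2
        · subst h
          rw [hT _ le_rfl, List.take_length]
          omega
  have hdisj : Pairwise (Function.onFun Disjoint fun l : ↑{l : List Bool | okb k y l = true} => cyl X l.1) := by
    intro l l' hne
    simp only [Function.onFun]
    rw [Set.disjoint_left]
    intro ω h h'
    exact hne (Subtype.ext (cyl_unique l.2 l'.2 h h'))
  calc P {ω | ∃ n : ℕ, y + (∑ i ∈ Finset.range n, X (i + 1) ω) = 0 ∧
        ∀ m ≤ n, y + (∑ i ∈ Finset.range m, X (i + 1) ω) ≠ k}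
      = P ({ω | ∃ n : ℕ, y + (∑ i ∈ Finset.range n, X (i + 1) ω) = 0 ∧
        ∀ m ≤ n, y + (∑ i ∈ Finset.range m, X (i + 1) ω) ≠ k} \ N) :=
        (measure_diff_null hN).symm
    _ = P (U \ N) := by rw [hEU]
    _ = P U := measure_diff_null hN
    _ = ∑' l : ↑{l : List Bool | okb k y l = true}, P (cyl X l.1) :=
        measure_iUnion hdisj (fun l => measurableSet_cyl hXmeas l.1)
    _ = ∑' l : ↑{l : List Bool | okb k y l = true}, wl p q l.1 :=
        tsum_congr fun l => meas_cyl P p q X hindep hXup hXdown l.1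
    _ = f p q k y := by
        rw [f]
        rw [tsum_subtype {l : List Bool | okb k y l = true} (wl p q)]
        apply tsum_congr
        intro l
        by_cases h : okb k y l = true
        · simp [Set.indicator_apply, Set.mem_setOf_eq, h]
        · simp [Set.indicator_apply, Set.mem_setOf_eq, h]

end GamblersRuinAux

open GamblersRuinAux

/-- Formula (3.1.6), case `p ≠ 1/2`: for the simple random walk started at `x`
with i.i.d. `±1` steps of probabilities `p` and `q = 1 - p`, the probability of
reaching `0` strictly before reaching `k` is `(1 - (p/q)^(k-x)) / (1 - (p/q)^k)`. -/
theorem gamblers_ruin_probability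
    {Ω : Type*} [m : MeasurableSpace Ω] (P : Measure Ω) [IsProbabilityMeasure P]
    (p q : ℝ) (hp0 : 0 < p) (hp1 : p < 1) (hp : p ≠ 1 / 2) (hq : q = 1 - p)
    (x k : ℤ) (hx : 0 < x) (hxk : x < k)
    (X : ℕ → Ω → ℤ) (hXmeas : ∀ n, Measurable (X n))
    (hindep : iIndepFun X P)
    (hident : ∀ n, IdentDistrib (X n) (X 0) P P)
    (hXup : ∀ n, P {ω | X n ω = 1} = ENNReal.ofReal p)
    (hXdown : ∀ n, P {ω | X n ω = -1} = ENNReal.ofReal q)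
    (S : ℕ → Ω → ℤ) (hS0 : ∀ ω, S 0 ω = x)
    (hSrec : ∀ n ω, S (n + 1) ω = S n ω + X (n + 1) ω) :
    P {ω | ∃ n : ℕ, S n ω = 0 ∧ ∀ m ≤ n, S m ω ≠ k} =
      ENNReal.ofReal ((1 - (p / q) ^ (k - x)) / (1 - (p / q) ^ k)) := by
  classical
  have hq0 : 0 < q := by rw [hq]; linarith
  have hpq : p + q = 1 := by rw [hq]; ring
  have hk : k ≠ 0 := by omega
  have hST : ∀ n ω, S n ω = x + ∑ i ∈ Finset.range n, X (i + 1) ω := by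
    intro n
    induction n with
    | zero => intro ω; simp [hS0]
    | succ i ih =>
      intro ω
      rw [hSrec, ih, Finset.sum_range_succ]
      ring
  have hmeq : ∀ y : ℤ, P {ω | ∃ n : ℕ, y + (∑ i ∈ Finset.range n, X (i + 1) ω) = 0 ∧
      ∀ m ≤ n, y + (∑ i ∈ Finset.range m, X (i + 1) ω) ≠ k} = f p q k y :=
    fun y => meas_eq_f P p q hp0.le hq0.le hpq k hk X hXmeas hindep hXup hXdown y
  have hsets : {ω | ∃ n : ℕ, S n ω = 0 ∧ ∀ m ≤ n, S m ω ≠ k} =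
      {ω | ∃ n : ℕ, x + (∑ i ∈ Finset.range n, X (i + 1) ω) = 0 ∧
        ∀ m ≤ n, x + (∑ i ∈ Finset.range m, X (i + 1) ω) ≠ k} := by
    ext ω
    simp only [Set.mem_setOf_eq, hST]
  have hfin : ∀ y : ℤ, f p q k y ≠ ⊤ := by
    intro y
    rw [← hmeq y]
    exact measure_ne_top P _
  have hF0 : (f p q k 0).toReal = 1 := by rw [f_zero]; simp
  have hFk : (f p q k k).toReal = 0 := by rw [f_k p q k hk]; simp
  have hrecF : ∀ y : ℤ, y ≠ 0 → y ≠ k →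
      (f p q k y).toReal = q * (f p q k (y - 1)).toReal + p * (f p q k (y + 1)).toReal := by
    intro y h0 hyk
    rw [f_rec p q k y h0 hyk, ENNReal.toReal_add
      (ENNReal.mul_ne_top ENNReal.ofReal_ne_top (hfin _))
      (ENNReal.mul_ne_top ENNReal.ofReal_ne_top (hfin _)),
      ENNReal.toReal_mul, ENNReal.toReal_mul,
      ENNReal.toReal_ofReal hq0.le, ENNReal.toReal_ofReal hp0.le]
  have hFx := solve p q hp0 hp1 hp hq x k hx hxk (fun y => (f p q k y).toReal)
    hF0 hFk hrecF
  rw [hsets, hmeq x, ← hFx]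
  exact (ENNReal.ofReal_toReal (hfin x)).symm
end

section
/- Let p be a real number with 1/2 < p < 1, set q = 1 - p, and let x be a positive integer. Let X₁, X₂, … be i.i.d. random variables on a probability space with P(Xₙ = 1) = p and P(Xₙ = -1) = q, and let Sₙ be the simple random walk defined by S₀ = x and Sₙ = Sₙ₋₁ + Xₙ. Then the probability that there exists some n ≥ 0 with Sₙ = 0 equals (q/p)^x. -/
open MeasureTheory ProbabilityTheory Filter

lemma aux_tendsto_zpow {r : ℝ} (h0 : 0 ≤ r) (h1 : r < 1) :
    Tendsto (fun z : ℤ => r ^ z) atTop (nhds 0) := by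
  have hnat : Tendsto (fun n : ℕ => r ^ n) atTop (nhds 0) :=
    tendsto_pow_atTop_nhds_zero_of_lt_one h0 h1
  have htoNat : Tendsto Int.toNat atTop atTop := by
    apply tendsto_atTop_atTop.2
    intro b; exact ⟨(b : ℤ), fun a ha => by omega⟩
  apply (hnat.comp htoNat).congr'
  filter_upwards [eventually_ge_atTop (0 : ℤ)] with z hz
  simp only [Function.comp_apply]
  rw [← zpow_natCast]
  congr 1
  omega

lemma aux_integral_two_point {Ω : Type*} [MeasurableSpace Ω] (P : Measure Ω)
    [IsProbabilityMeasure P] {Z : Ω → ℤ} (hZ : Measurable Z) {p : ℝ}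
    (hp0 : 0 ≤ p) (hp1 : p ≤ 1)
    (hup : P {ω | Z ω = 1} = ENNReal.ofReal p) (a b : ℝ) :
    ∫ ω, (if Z ω = 1 then a else b) ∂P = a * p + b * (1 - p) := by
  classical
  set A : Set Ω := {ω | Z ω = 1} with hA
  have hAm : MeasurableSet A := hZ (measurableSet_singleton 1)
  have h1 : (fun ω => if Z ω = 1 then a else b)
      = fun ω => A.indicator (fun _ => a) ω + Aᶜ.indicator (fun _ => b) ω := by
    funext ω
    by_cases h : Z ω = 1 <;>
      simp [A, Set.indicator_apply, h]
  rw [h1, integral_add ((integrable_const a).indicator hAm)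
      ((integrable_const b).indicator hAm.compl),
    integral_indicator_const a hAm, integral_indicator_const b hAm.compl]
  have hcompl : P Aᶜ = ENNReal.ofReal (1 - p) := by
    rw [measure_compl hAm (measure_ne_top _ _), hup, measure_univ]
    rw [ENNReal.ofReal_sub _ hp0, ENNReal.ofReal_one]
  rw [measureReal_def, measureReal_def, hup, hcompl, ENNReal.toReal_ofReal hp0, ENNReal.toReal_ofReal (by linarith)]
  simp only [smul_eq_mul]; ring

/-- Formula (3.1.7), case `p > 1/2`: for the simple random walk started at
`x > 0` with i.i.d. `±1` steps of probabilities `p` and `q = 1 - p`, the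
probability of ever reaching `0` is `(q/p)^x`. -/
theorem gamblers_eventual_ruin_probability_p_gt_half
    {Ω : Type*} [m : MeasurableSpace Ω] (P : Measure Ω) [IsProbabilityMeasure P]
    (p q : ℝ) (hp : 1 / 2 < p) (hp1 : p < 1) (hq : q = 1 - p)
    (x : ℕ) (hx : 0 < x)
    (X : ℕ → Ω → ℤ) (hXmeas : ∀ n, Measurable (X n))
    (hindep : iIndepFun X P)
    (hident : ∀ n, IdentDistrib (X n) (X 0) P P)
    (hXup : ∀ n, P {ω | X n ω = 1} = ENNReal.ofReal p)
    (hXdown : ∀ n, P {ω | X n ω = -1} = ENNReal.ofReal q)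
    (S : ℕ → Ω → ℤ) (hS0 : ∀ ω, S 0 ω = (x : ℤ))
    (hSrec : ∀ n ω, S (n + 1) ω = S n ω + X (n + 1) ω) :
    P {ω | ∃ n : ℕ, S n ω = 0} = ENNReal.ofReal ((q / p) ^ x) := by
  classical
  have hp0 : 0 < p := by linarith
  have hq0 : 0 < q := by rw [hq]; linarith
  have hqp : q < p := by rw [hq]; linarith
  set r : ℝ := q / p with hrdef
  have hr0 : 0 < r := div_pos hq0 hp0
  have hr1 : r < 1 := (div_lt_one hp0).2 hqp
  have hrne : r ≠ 0 := ne_of_gt hr0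
  -- measurability of S
  have hSmeas : ∀ n, Measurable (S n) := by
    intro n
    induction n with
    | zero => have : S 0 = fun _ => (x : ℤ) := funext hS0
              rw [this]; exact measurable_const
    | succ n ih => have : S (n + 1) = fun ω => S n ω + X (n + 1) ω := funext (hSrec n)
                   rw [this]; exact ih.add (hXmeas (n + 1))
  -- S as a sum
  have hSsum : ∀ n ω, S n ω = (x : ℤ) + ∑ i ∈ Finset.range n, X (i + 1) ω := by
    intro n ω
    induction n with
    | zero => simp [hS0]
    | succ n ih => rw [hSrec n ω, ih, Finset.sum_range_succ]; ring
  -- the a.e. event that all steps are ±1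
  have hEae : ∀ᵐ ω ∂P, ∀ n, X n ω = 1 ∨ X n ω = -1 := by
    rw [ae_all_iff]
    intro n
    have hdisj : Disjoint {ω | X n ω = 1} {ω | X n ω = -1} := by
      rw [Set.disjoint_left]; intro ω h1 h2; simp only [Set.mem_setOf_eq] at h1 h2; omega
    have hm1 : MeasurableSet {ω | X n ω = 1} := hXmeas n (measurableSet_singleton 1)
    have hm2 : MeasurableSet {ω | X n ω = -1} := hXmeas n (measurableSet_singleton (-1))
    have hunion : P ({ω | X n ω = 1} ∪ {ω | X n ω = -1}) = 1 := by
      rw [measure_union hdisj hm2, hXup n, hXdown n, ← ENNReal.ofReal_add hp0.le hq0.le]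
      rw [hq]; norm_num
    have : P ({ω | X n ω = 1} ∪ {ω | X n ω = -1})ᶜ = 0 := by
      rw [measure_compl (hm1.union hm2) (measure_ne_top _ _), hunion, measure_univ, tsub_self]
    rw [ae_iff]
    have hset : {ω | ¬(X n ω = 1 ∨ X n ω = -1)} = ({ω | X n ω = 1} ∪ {ω | X n ω = -1})ᶜ := by
      ext ω; simp [not_or]
    rw [hset]; exact this
  -- positivity / bound facts for zpow
  have hrz_pos : ∀ z : ℤ, 0 < r ^ z := fun z => zpow_pos hr0 z
  have hrz_le_one : ∀ z : ℤ, 0 ≤ z → r ^ z ≤ 1 := by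
    intro z hz
    rw [show z = ((z.toNat : ℕ) : ℤ) by omega, zpow_natCast]
    exact pow_le_one₀ hr0.le hr1.le
  -- before hitting 0, the walk stays ≥ 1 (given ±1 steps)
  have hSge : ∀ ω, (∀ k, X k ω = 1 ∨ X k ω = -1) →
      ∀ n, ¬(∃ k ≤ n, S k ω = 0) → 1 ≤ S n ω := by
    intro ω hpm n
    induction n with
    | zero =>
      intro _
      rw [hS0]; exact_mod_cast hx
    | succ n ih =>
      intro hno
      have hnoN : ¬(∃ k ≤ n, S k ω = 0) := by
        rintro ⟨k, hk, hk0⟩; exact hno ⟨k, by omega, hk0⟩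
      have h1 := ih hnoN
      have h2 : S (n + 1) ω ≠ 0 := fun h => hno ⟨n + 1, le_refl _, h⟩
      have h3 := hSrec n ω
      rcases hpm (n + 1) with h | h <;> omega
  -- the stopped exponential process
  set W : ℕ → Ω → ℝ :=
    fun n ω => if ∃ k ≤ n, S k ω = 0 then 1 else r ^ S n ω with hWdef
  have hHmeas : ∀ n, MeasurableSet {ω | ∃ k ≤ n, S k ω = 0} := by
    intro n
    have : {ω | ∃ k ≤ n, S k ω = 0} = ⋃ k ∈ Finset.range (n + 1), {ω | S k ω = 0} := by
      ext ω; simp [Nat.lt_succ_iff]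
    rw [this]
    exact (Finset.range (n + 1)).measurableSet_biUnion
      (fun k _ => hSmeas k (measurableSet_singleton 0))
  have hWmeas : ∀ n, Measurable (W n) := by
    intro n
    exact Measurable.ite (hHmeas n) measurable_const
      ((measurable_of_countable (fun z : ℤ => r ^ z)).comp (hSmeas n))
  have hWbound : ∀ n, ∀ᵐ ω ∂P, ‖W n ω‖ ≤ 1 := by
    intro n
    filter_upwards [hEae] with ω hω
    rw [hWdef]
    by_cases h : ∃ k ≤ n, S k ω = 0
    · simp [h]
    · simp only [h, if_false]
      rw [Real.norm_eq_abs, abs_of_pos (hrz_pos _)]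
      exact hrz_le_one _ (by have := hSge ω hω n h; omega)
  have hWint : ∀ n, Integrable (W n) P :=
    fun n => Integrable.mono' (integrable_const 1) (hWmeas n).aestronglyMeasurable (hWbound n)
  -- constant expectation of the stopped process
  have hWexp : ∀ n, ∫ ω, W n ω ∂P = r ^ x := by
    intro n
    induction n with
    | zero =>
      have : W 0 = fun _ => r ^ x := by
        funext ω
        rw [hWdef]
        have : ¬ ∃ k ≤ 0, S k ω = 0 := by
          rintro ⟨k, hk, h0⟩
          interval_cases k
          rw [hS0] at h0
          omega
        simp only [this, if_false]
        rw [hS0, zpow_natCast]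
      rw [this]; simp
    | succ n ih =>
      rw [← ih]
      set F : Ω → ℝ := fun ω => if ∃ k ≤ n, S k ω = 0 then 0 else r ^ S n ω with hFdef
      set G : Ω → ℝ := fun ω => r ^ X (n + 1) ω - 1 with hGdef
      have hFmeas : Measurable F :=
        Measurable.ite (hHmeas n) measurable_const
          ((measurable_of_countable (fun z : ℤ => r ^ z)).comp (hSmeas n))
      have hGmeas : Measurable G :=
        (measurable_of_countable (fun z : ℤ => r ^ z - 1)).comp (hXmeas (n + 1))
      -- pointwise recursion
      have hWrec : ∀ ω, W (n + 1) ω = W n ω + F ω * G ω := by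
        intro ω
        show (if ∃ k ≤ n + 1, S k ω = 0 then (1 : ℝ) else r ^ S (n + 1) ω)
            = (if ∃ k ≤ n, S k ω = 0 then (1 : ℝ) else r ^ S n ω)
              + (if ∃ k ≤ n, S k ω = 0 then (0 : ℝ) else r ^ S n ω) * (r ^ X (n + 1) ω - 1)
        by_cases h : ∃ k ≤ n, S k ω = 0
        · have h' : ∃ k ≤ n + 1, S k ω = 0 := by
            obtain ⟨k, hk, h0⟩ := h; exact ⟨k, by omega, h0⟩
          rw [if_pos h, if_pos h, if_pos h']
          ring
        · rw [if_neg h, if_neg h]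
          have hstep : r ^ S (n + 1) ω = r ^ S n ω * r ^ X (n + 1) ω := by
            rw [hSrec n ω, zpow_add₀ hrne]
          by_cases h0 : S (n + 1) ω = 0
          · rw [if_pos ⟨n + 1, le_refl _, h0⟩]
            have h1 : r ^ S n ω * r ^ X (n + 1) ω = 1 := by rw [← hstep, h0, zpow_zero]
            nlinarith [h1]
          · rw [if_neg ?_]
            · rw [hstep]; ring
            · rintro ⟨k, hk, hk0⟩
              have : k ≤ n ∨ k = n + 1 := by omega
              rcases this with h2 | h2
              · exact h ⟨k, h2, hk0⟩
              · exact h0 (h2 ▸ hk0)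
      -- independence of F and G
      have hdisj : Disjoint (Finset.range (n + 1)) ({n + 1} : Finset ℕ) := by
        simp [Finset.disjoint_singleton_right]
      have hbase := hindep.indepFun_finset (Finset.range (n + 1)) {n + 1} hdisj hXmeas
      set phi : ((i : (Finset.range (n + 1) : Finset ℕ)) → ℤ) → ℝ := fun v =>
        if ∃ k : Fin (n + 1), ((x : ℤ) + ∑ i ∈ (Finset.range (k : ℕ)).attach,
            v ⟨(i : ℕ) + 1, Finset.mem_range.2 (by
              have h1 := Finset.mem_range.1 i.2; have h2 := k.2; omega)⟩) = 0 then 0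
        else r ^ ((x : ℤ) + ∑ i ∈ (Finset.range n).attach,
            v ⟨(i : ℕ) + 1, Finset.mem_range.2 (by
              have h1 := Finset.mem_range.1 i.2; omega)⟩) with hphidef
      set psi : ((i : ({n + 1} : Finset ℕ)) → ℤ) → ℝ :=
        fun v => r ^ v ⟨n + 1, Finset.mem_singleton_self _⟩ - 1 with hpsidef
      have hsumattach : ∀ k : ℕ, ∀ ω,
          (∑ i ∈ (Finset.range k).attach, X ((i : ℕ) + 1) ω)
            = ∑ i ∈ Finset.range k, X (i + 1) ω :=
        fun k ω => Finset.sum_attach (Finset.range k) (fun j => X (j + 1) ω)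
      have hFeq : F = phi ∘ (fun ω (i : (Finset.range (n + 1) : Finset ℕ)) => X (i : ℕ) ω) := by
        funext ω
        simp only [hFdef, hphidef, Function.comp_apply]
        have hiff : (∃ k ≤ n, S k ω = 0) ↔ (∃ k : Fin (n + 1),
            ((x : ℤ) + ∑ i ∈ (Finset.range (k : ℕ)).attach, X ((i : ℕ) + 1) ω) = 0) := by
          constructor
          · rintro ⟨k, hk, h0⟩
            refine ⟨⟨k, by omega⟩, ?_⟩
            rw [hsumattach k ω, ← hSsum k ω]
            exact h0
          · rintro ⟨k, hk⟩
            rw [hsumattach (k : ℕ) ω, ← hSsum (k : ℕ) ω] at hk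
            exact ⟨(k : ℕ), by omega, hk⟩
        refine if_congr hiff rfl ?_
        rw [hsumattach n ω, ← hSsum n ω]
      have hGeq : G = psi ∘ (fun ω (i : ({n + 1} : Finset ℕ)) => X (i : ℕ) ω) := rfl
      have hFGindep : IndepFun F G P := by
        rw [hFeq, hGeq]
        exact hbase.comp (measurable_of_countable phi) (measurable_of_countable psi)
      -- expectation of r ^ X is 1
      have hrr : r ≤ r⁻¹ := hr1.le.trans ((one_le_inv₀ hr0).2 hr1.le)
      have hint1 : ∫ ω, r ^ X (n + 1) ω ∂P = 1 := by
        have heq : ∫ ω, r ^ X (n + 1) ω ∂P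
            = ∫ ω, (if X (n + 1) ω = 1 then r else r⁻¹) ∂P := by
          apply integral_congr_ae
          filter_upwards [hEae] with ω hω
          rcases hω (n + 1) with h | h
          · simp [h]
          · rw [h]; simp
        rw [heq, aux_integral_two_point P (hXmeas (n + 1)) hp0.le hp1.le (hXup (n + 1)) r r⁻¹]
        have h1 : r * p = q := by rw [hrdef]; field_simp
        have h2 : r⁻¹ * (1 - p) = p := by
          rw [hrdef, inv_div, ← hq]; field_simp
        rw [h1, h2]; linarith [hq]
      have hGint_r : Integrable (fun ω => r ^ X (n + 1) ω) P := by
        apply Integrable.mono' (integrable_const r⁻¹)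
          ((measurable_of_countable (fun z : ℤ => r ^ z)).comp
            (hXmeas (n + 1))).aestronglyMeasurable
        filter_upwards [hEae] with ω hω
        simp only [Function.comp_apply]
        rw [Real.norm_eq_abs, abs_of_pos (hrz_pos _)]
        rcases hω (n + 1) with h | h
        · rw [h]; simpa using hrr
        · rw [h]; simp
      have hGmean : ∫ ω, G ω ∂P = 0 := by
        have : ∫ ω, G ω ∂P = ∫ ω, (r ^ X (n + 1) ω - 1) ∂P := rfl
        rw [this, integral_sub hGint_r (integrable_const 1), hint1, integral_const]
        simp
      have hFbound : ∀ᵐ ω ∂P, ‖F ω‖ ≤ 1 := by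
        filter_upwards [hEae] with ω hω
        simp only [hFdef]
        by_cases h : ∃ k ≤ n, S k ω = 0
        · simp [h]
        · simp only [h, if_false]
          rw [Real.norm_eq_abs, abs_of_pos (hrz_pos _)]
          exact hrz_le_one _ (by have := hSge ω hω n h; omega)
      have hFGint : Integrable (fun ω => F ω * G ω) P := by
        apply Integrable.mono' (integrable_const (1 * (r⁻¹ + 1)))
          (hFmeas.mul hGmeas).aestronglyMeasurable
        filter_upwards [hFbound, hEae] with ω hF hω
        rw [Pi.mul_apply, norm_mul]
        have hGb : ‖G ω‖ ≤ r⁻¹ + 1 := by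
          have : ‖G ω‖ ≤ ‖r ^ X (n + 1) ω‖ + 1 := by
            simpa [hGdef] using norm_sub_le (r ^ X (n + 1) ω) 1
          refine this.trans ?_
          have hb : ‖r ^ X (n + 1) ω‖ ≤ r⁻¹ := by
            rw [Real.norm_eq_abs, abs_of_pos (hrz_pos _)]
            rcases hω (n + 1) with h | h
            · rw [h]; simpa using hrr
            · rw [h]; simp
          linarith
        exact mul_le_mul hF hGb (norm_nonneg _) zero_le_one
      have hsplit : ∫ ω, W (n + 1) ω ∂P = ∫ ω, W n ω ∂P + ∫ ω, F ω * G ω ∂P := by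
        rw [← integral_add (hWint n) hFGint]
        exact integral_congr_ae (Filter.Eventually.of_forall fun ω => hWrec ω)
      have hprod : ∫ ω, F ω * G ω ∂P = 0 := by
        rw [hFGindep.integral_fun_mul_eq_mul_integral hFmeas.aestronglyMeasurable hGmeas.aestronglyMeasurable,
          hGmean, mul_zero]
      rw [hsplit, hprod, add_zero]
  -- SLLN: the walk tends to +∞ a.s.
  have hT : ∀ᵐ ω ∂P, Tendsto (fun n => S n ω) atTop atTop := by
    have cast_meas : Measurable (fun z : ℤ => (z : ℝ)) := measurable_of_countable _
    set Y : ℕ → Ω → ℝ := fun i ω => ((X (i + 1) ω : ℤ) : ℝ) with hYdef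
    have hYmeas : ∀ i, Measurable (Y i) := fun i => cast_meas.comp (hXmeas (i + 1))
    have hYint : Integrable (Y 0) P := by
      apply Integrable.mono' (integrable_const 1) (hYmeas 0).aestronglyMeasurable
      filter_upwards [hEae] with ω hω
      rcases hω 1 with h | h <;> simp [Y, h]
    have hYindep : Pairwise (Function.onFun (IndepFun · · P) Y) := by
      intro i j hij
      exact (hindep.indepFun (show i + 1 ≠ j + 1 by omega)).comp cast_meas cast_meas
    have hYident : ∀ i, IdentDistrib (Y i) (Y 0) P P :=
      fun i => ((hident (i + 1)).trans (hident (0 + 1)).symm).comp cast_meas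
    have hYmean : ∫ ω, Y 0 ω ∂P = p - q := by
      have heq : ∫ ω, Y 0 ω ∂P = ∫ ω, (if X 1 ω = 1 then (1 : ℝ) else -1) ∂P := by
        apply integral_congr_ae
        filter_upwards [hEae] with ω hω
        rcases hω 1 with h | h <;> simp [Y, h]
      rw [heq, aux_integral_two_point P (hXmeas 1) hp0.le hp1.le (hXup 1) 1 (-1)]
      rw [hq]; ring
    have hSLLN := strong_law_ae_real Y hYint hYindep hYident
    rw [hYmean] at hSLLN
    have hpq : 0 < p - q := by rw [hq]; linarith
    filter_upwards [hSLLN] with ω hω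
    have h1 : Tendsto (fun n : ℕ => (S n ω : ℝ) / n) atTop (nhds (p - q)) := by
      have hx0 : Tendsto (fun n : ℕ => (x : ℝ) / n) atTop (nhds 0) :=
        tendsto_const_div_atTop_nhds_zero_nat _
      have hadd := hx0.add hω
      rw [zero_add] at hadd
      apply hadd.congr
      intro n
      rw [hSsum n ω]
      push_cast
      rw [add_div]
    have h2 : Tendsto (fun n : ℕ => (S n ω : ℝ)) atTop atTop := by
      apply (h1.pos_mul_atTop hpq tendsto_natCast_atTop_atTop).congr'
      filter_upwards [eventually_ge_atTop 1] with n hn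
      rw [div_mul_cancel₀]
      exact Nat.cast_ne_zero.2 (by omega)
    exact tendsto_intCast_atTop_iff.1 h2
  -- a.e. convergence of W to the indicator of ruin
  set A : Set Ω := {ω | ∃ n : ℕ, S n ω = 0} with hAdef
  have hAmeas : MeasurableSet A := by
    have : A = ⋃ n, {ω | S n ω = 0} := by ext ω; simp [hAdef]
    rw [this]
    exact MeasurableSet.iUnion fun n => hSmeas n (measurableSet_singleton 0)
  have hWlim : ∀ᵐ ω ∂P, Tendsto (fun n => W n ω) atTop
      (nhds (A.indicator (fun _ => (1 : ℝ)) ω)) := by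
    filter_upwards [hT] with ω hω
    by_cases hA : ω ∈ A
    · rw [Set.indicator_of_mem hA]
      obtain ⟨n0, hn0⟩ := hA
      apply tendsto_const_nhds.congr'
      filter_upwards [eventually_ge_atTop n0] with n hn
      rw [hWdef]
      simp only [show ∃ k ≤ n, S k ω = 0 from ⟨n0, hn, hn0⟩, if_true]
    · rw [Set.indicator_of_notMem hA]
      have hnone : ∀ k, S k ω ≠ 0 := by
        intro k hk; exact hA ⟨k, hk⟩
      have : (fun n => W n ω) = fun n => r ^ S n ω := by
        funext n
        rw [hWdef]
        simp only [ite_eq_right_iff]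
        intro ⟨k, _, hk0⟩
        exact absurd hk0 (hnone k)
      rw [this]
      exact (aux_tendsto_zpow hr0.le hr1).comp hω
  -- dominated convergence
  have hDCT : Tendsto (fun n => ∫ ω, W n ω ∂P) atTop
      (nhds (∫ ω, A.indicator (fun _ => (1 : ℝ)) ω ∂P)) :=
    tendsto_integral_of_dominated_convergence (fun _ => (1 : ℝ))
      (fun n => (hWmeas n).aestronglyMeasurable) (integrable_const 1) hWbound hWlim
  have hIeq : ∫ ω, A.indicator (fun _ => (1 : ℝ)) ω ∂P = (P A).toReal := by
    rw [integral_indicator_const (1 : ℝ) hAmeas, smul_eq_mul, mul_one, measureReal_def]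
  have hconst : (fun n => ∫ ω, W n ω ∂P) = fun _ => r ^ x := funext hWexp
  rw [hconst, hIeq] at hDCT
  have hfinal : (P A).toReal = r ^ x := (tendsto_nhds_unique tendsto_const_nhds hDCT).symm
  rw [← hfinal, ENNReal.ofReal_toReal (measure_ne_top _ _)]
end

section
/- Let p be a real number with 0 < p ≤ 1/2, set q = 1 - p, and let x be a positive integer. Let X₁, X₂, … be i.i.d. random variables on a probability space with P(Xₙ = 1) = p and P(Xₙ = -1) = q, and let Sₙ be the simple random walk defined by S₀ = x and Sₙ = Sₙ₋₁ + Xₙ. Then the probability that there exists some n ≥ 0 with Sₙ = 0 equals 1; i.e., ruin is almost sure. -/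
open MeasureTheory ProbabilityTheory Filter
open scoped NNReal ENNReal Topology

/-- Formula (3.1.7), case `p ≤ 1/2`: for the simple random walk started at
`x > 0` with i.i.d. `±1` steps of probabilities `p` and `q = 1 - p`, ruin
(ever reaching `0`) is almost sure. -/
theorem gamblers_eventual_ruin_probability_p_le_half
    {Ω : Type*} [m : MeasurableSpace Ω] (P : Measure Ω) [IsProbabilityMeasure P]
    (p q : ℝ) (hp0 : 0 < p) (hp : p ≤ 1 / 2) (hq : q = 1 - p)
    (x : ℕ) (hx : 0 < x)
    (X : ℕ → Ω → ℤ) (hXmeas : ∀ n, Measurable (X n))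
    (hindep : iIndepFun X P)
    (hident : ∀ n, IdentDistrib (X n) (X 0) P P)
    (hXup : ∀ n, P {ω | X n ω = 1} = ENNReal.ofReal p)
    (hXdown : ∀ n, P {ω | X n ω = -1} = ENNReal.ofReal q)
    (S : ℕ → Ω → ℤ) (hS0 : ∀ ω, S 0 ω = (x : ℤ))
    (hSrec : ∀ n ω, S (n + 1) ω = S n ω + X (n + 1) ω) :
    P {ω | ∃ n : ℕ, S n ω = 0} = 1 := by
  have hq0 : 0 < q := by rw [hq]; linarith
  -- a.e., every step is ±1
  have hpm : ∀ᵐ ω ∂P, ∀ n, X n ω = 1 ∨ X n ω = -1 := by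
    rw [ae_all_iff]
    intro n
    have hA : MeasurableSet {ω | X n ω = 1} := hXmeas n (measurableSet_singleton 1)
    have hB : MeasurableSet {ω | X n ω = -1} := hXmeas n (measurableSet_singleton (-1))
    have hdisj : Disjoint {ω | X n ω = 1} {ω | X n ω = -1} := by
      rw [Set.disjoint_left]
      rintro ω (h1 : X n ω = 1) (h2 : X n ω = -1)
      rw [h1] at h2; norm_num at h2
    have hU : P ({ω | X n ω = 1} ∪ {ω | X n ω = -1}) = 1 := by
      rw [measure_union hdisj hB, hXup n, hXdown n,
        ← ENNReal.ofReal_add hp0.le hq0.le, hq]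
      norm_num
    rw [ae_iff]
    have hset : {ω | ¬(X n ω = 1 ∨ X n ω = -1)} =
        ({ω | X n ω = 1} ∪ {ω | X n ω = -1})ᶜ := by
      ext ω; simp [not_or]
    rw [hset, measure_compl (hA.union hB) (measure_ne_top _ _), hU, measure_univ]
    simp
  -- the real-valued step process
  set f : ℕ → Ω → ℝ := fun n ω => ((X n ω : ℤ) : ℝ) with hfdef
  have hfval : ∀ n ω, f n ω = ((X n ω : ℤ) : ℝ) := fun _ _ => rfl
  have hf : ∀ n, StronglyMeasurable (f n) := fun n =>
    (measurable_from_top.comp (hXmeas n)).stronglyMeasurable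
  set ℱ := MeasureTheory.Filtration.natural f hf with hFdef
  have hindepf : iIndepFun f P :=
    hindep.comp (fun _ => (Int.cast : ℤ → ℝ)) (fun _ => measurable_from_top)
  have hfbdd : ∀ n, ∀ᵐ ω ∂P, ‖f n ω‖ ≤ 1 := by
    intro n
    filter_upwards [hpm] with ω hω
    rw [hfval]
    rcases hω n with h | h <;> rw [h] <;> norm_num
  have hfint : ∀ n, Integrable (f n) P := fun n =>
    Integrable.mono' (integrable_const 1) (hf n).aestronglyMeasurable (hfbdd n)
  -- the mean of each step is 2p - 1 ≤ 0
  have hEf : ∀ n, ∫ ω, f n ω ∂P = 2 * p - 1 := by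
    intro n
    have hA : MeasurableSet {ω | X n ω = 1} := hXmeas n (measurableSet_singleton 1)
    have heq : f n =ᵐ[P]
        fun ω => Set.indicator {ω | X n ω = 1} (fun _ => (2 : ℝ)) ω - 1 := by
      filter_upwards [hpm] with ω hω
      rcases hω n with h | h
      · rw [Set.indicator_of_mem (by exact h), hfval, h]; norm_num
      · rw [Set.indicator_of_notMem (by simp [Set.mem_setOf_eq, h]), hfval, h]
        norm_num
    rw [integral_congr_ae heq, integral_sub ((integrable_const (2:ℝ)).indicator hA)
      (integrable_const 1), integral_indicator_const _ hA, integral_const,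
      measureReal_def, measureReal_def, hXup n, measure_univ]
    rw [ENNReal.toReal_ofReal hp0.le]
    simp; ring
  have hEfle : ∀ n, ∫ ω, f n ω ∂P ≤ 0 := by
    intro n; rw [hEf n]; linarith
  -- the real-valued walk
  set g : ℕ → Ω → ℝ := fun n ω => ((S n ω : ℤ) : ℝ) with hgdef
  have hgval : ∀ n ω, g n ω = ((S n ω : ℤ) : ℝ) := fun _ _ => rfl
  have hgrec : ∀ n ω, g (n + 1) ω = g n ω + f (n + 1) ω := by
    intro n ω; rw [hgval, hgval, hfval, hSrec n ω]; push_cast; ring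
  have hg0 : ∀ ω, g 0 ω = (x : ℝ) := by
    intro ω; rw [hgval, hS0 ω]; push_cast; ring
  have hgsm : ∀ n, StronglyMeasurable[ℱ n] (g n) := by
    intro n
    induction n with
    | zero =>
      have : g 0 = fun _ => (x : ℝ) := funext hg0
      rw [this]; exact stronglyMeasurable_const
    | succ k ih =>
      have : g (k + 1) = fun ω => g k ω + f (k + 1) ω := funext (hgrec k)
      rw [this]
      exact (ih.mono (ℱ.mono k.le_succ)).add
        (MeasureTheory.Filtration.stronglyAdapted_natural hf (k + 1))
  -- the "not yet ruined" events
  set Z : ℕ → Set Ω := fun n => {ω | ∀ k ≤ n, S k ω ≠ 0} with hZdef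
  have hZmem : ∀ n ω, ω ∈ Z n ↔ ∀ k ≤ n, S k ω ≠ 0 := fun _ _ => Iff.rfl
  have hZmeas : ∀ n, MeasurableSet[ℱ n] (Z n) := by
    intro n
    have : Z n = ⋂ k ∈ Set.Iic n, (g k) ⁻¹' ({0}ᶜ) := by
      ext ω
      simp only [hZmem, Set.mem_iInter, Set.mem_Iic,
        Set.mem_preimage, Set.mem_compl_iff, Set.mem_singleton_iff, hgval]
      constructor
      · intro h k hk; exact_mod_cast h k hk
      · intro h k hk; exact_mod_cast h k hk
    rw [this]
    exact MeasurableSet.biInter (Set.to_countable _) fun k hk =>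
      ((hgsm k).mono (ℱ.mono hk)).measurable (measurableSet_singleton 0).compl
  have hZanti : ∀ n, Z (n + 1) ⊆ Z n := by
    intro n ω hω k hk; exact hω k (hk.trans n.le_succ)
  -- the stopped walk
  set Y : ℕ → Ω → ℝ := fun n => (Z n).indicator (g n) with hYdef
  have hYval : ∀ n ω, Y n ω = (Z n).indicator (g n) ω := fun _ _ => rfl
  have hYadapted : StronglyAdapted ℱ Y := fun n => (hgsm n).indicator (hZmeas n)
  have hYrec : ∀ n ω, Y (n + 1) ω = Y n ω + (Z n).indicator (f (n + 1)) ω := by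
    intro n ω
    rw [hYval, hYval]
    by_cases hn : ω ∈ Z n
    · rw [Set.indicator_of_mem hn, Set.indicator_of_mem hn]
      by_cases hz : S (n + 1) ω = 0
      · have hnot : ω ∉ Z (n + 1) := by
          intro h; exact (h (n + 1) le_rfl) hz
        rw [Set.indicator_of_notMem hnot]
        have : g (n + 1) ω = 0 := by rw [hgval, hz]; norm_num
        rw [hgrec n ω] at this; linarith
      · have hmem : ω ∈ Z (n + 1) := by
          intro k hk
          rcases eq_or_lt_of_le hk with h | h
          · rw [h]; exact hz
          · exact hn k (Nat.lt_succ_iff.mp h)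
        rw [Set.indicator_of_mem hmem, hgrec n ω]
    · have hnot : ω ∉ Z (n + 1) := fun h => hn (hZanti n h)
      rw [Set.indicator_of_notMem hn, Set.indicator_of_notMem hnot,
        Set.indicator_of_notMem hn]
      ring
  -- pathwise bounds
  have hgb : ∀ᵐ ω ∂P, ∀ n, ‖g n ω‖ ≤ (x : ℝ) + n := by
    filter_upwards [hpm] with ω hω
    intro n
    induction n with
    | zero => simp [hg0 ω]
    | succ k ih =>
      rw [hgrec k ω]
      have h1 : ‖f (k + 1) ω‖ ≤ 1 := by
        rw [hfval]
        rcases hω (k + 1) with h | h <;> rw [h] <;> norm_num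
      calc ‖g k ω + f (k + 1) ω‖ ≤ ‖g k ω‖ + ‖f (k + 1) ω‖ := norm_add_le _ _
        _ ≤ ((x : ℝ) + k) + 1 := add_le_add ih h1
        _ = (x : ℝ) + (k + 1 : ℕ) := by push_cast; ring
  have hYabs : ∀ n ω, ‖Y n ω‖ ≤ ‖g n ω‖ := by
    intro n ω
    rw [hYval]
    by_cases h : ω ∈ Z n
    · rw [Set.indicator_of_mem h]
    · rw [Set.indicator_of_notMem h]; simp
  have hYint : ∀ n, Integrable (Y n) P := by
    intro n
    refine Integrable.mono' (integrable_const ((x : ℝ) + n))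
      ((hYadapted n).mono (ℱ.le n)).aestronglyMeasurable ?_
    filter_upwards [hgb] with ω hω
    exact (hYabs n ω).trans (hω n)
  -- supermartingale property
  have hindint : ∀ n, Integrable ((Z n).indicator (f (n + 1))) P := by
    intro n
    refine Integrable.mono' (integrable_const 1)
      (((hf (n + 1)).indicator ((ℱ.le n) _ (hZmeas n))).aestronglyMeasurable) ?_
    filter_upwards [hfbdd (n + 1)] with ω hω
    calc ‖(Z n).indicator (f (n + 1)) ω‖ ≤ ‖f (n + 1) ω‖ := by
          by_cases h : ω ∈ Z n
          · rw [Set.indicator_of_mem h]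
          · rw [Set.indicator_of_notMem h]; simp
      _ ≤ 1 := hω
  have hsup : Supermartingale Y ℱ P := by
    refine supermartingale_nat hYadapted hYint fun n => ?_
    have hprodeq : (fun ω => (Z n).indicator (fun _ => (1 : ℝ)) ω) * f (n + 1)
        = (Z n).indicator (f (n + 1)) := by
      funext ω
      rw [Pi.mul_apply]
      by_cases h : ω ∈ Z n
      · rw [Set.indicator_of_mem h, Set.indicator_of_mem h]; ring
      · rw [Set.indicator_of_notMem h, Set.indicator_of_notMem h]; ring
    have hre : Y (n + 1) = Y n +
        (fun ω => (Z n).indicator (fun _ => (1 : ℝ)) ω) * f (n + 1) := by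
      funext ω
      rw [Pi.add_apply, hprodeq, hYrec n ω]
    have hintprod : Integrable
        ((fun ω => (Z n).indicator (fun _ => (1 : ℝ)) ω) * f (n + 1)) P := by
      rw [hprodeq]; exact hindint n
    have h1 : P[Y (n + 1)|ℱ n] =ᵐ[P] P[Y n|ℱ n] +
        P[(fun ω => (Z n).indicator (fun _ => (1 : ℝ)) ω) * f (n + 1)|ℱ n] := by
      rw [hre]
      exact condExp_add (hYint n) hintprod _
    have h2 : P[Y n|ℱ n] =ᵐ[P] Y n := by
      rw [condExp_of_stronglyMeasurable (ℱ.le n) (hYadapted n) (hYint n)]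
    have h3 : P[(fun ω => (Z n).indicator (fun _ => (1 : ℝ)) ω) * f (n + 1)|ℱ n]
        =ᵐ[P] (fun ω => (Z n).indicator (fun _ => (1 : ℝ)) ω) * P[f (n + 1)|ℱ n] :=
      condExp_mul_of_stronglyMeasurable_left (stronglyMeasurable_const.indicator (hZmeas n))
        hintprod (hfint (n + 1))
    have h4 : P[f (n + 1)|ℱ n] =ᵐ[P] fun _ => ∫ ω, f (n + 1) ω ∂P :=
      hindepf.condExp_natural_ae_eq_of_lt hf n.lt_succ_self
    filter_upwards [h1, h2, h3, h4.mono fun ω hω => hω] with ω hω1 hω2 hω3 hω4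
    rw [hω1, Pi.add_apply, hω2, hω3, Pi.mul_apply, hω4]
    have hnonneg : 0 ≤ (Z n).indicator (fun _ => (1 : ℝ)) ω := by
      by_cases h : ω ∈ Z n
      · rw [Set.indicator_of_mem h]; norm_num
      · rw [Set.indicator_of_notMem h]
    nlinarith [hEfle (n + 1)]
  -- nonnegativity of the stopped walk
  have hSpos : ∀ᵐ ω ∂P, ∀ n, ω ∈ Z n → 1 ≤ S n ω := by
    filter_upwards [hpm] with ω hω
    intro n
    induction n with
    | zero => intro _; rw [hS0 ω]; exact_mod_cast hx
    | succ k ih =>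
      intro hmem
      have h1 : 1 ≤ S k ω := ih (hZanti k hmem)
      have h2 : S (k + 1) ω ≠ 0 := hmem (k + 1) le_rfl
      have h3 := hSrec k ω
      rcases hω (k + 1) with h | h <;> omega
  have hYnonneg : ∀ᵐ ω ∂P, ∀ n, 0 ≤ Y n ω := by
    filter_upwards [hSpos] with ω hω
    intro n
    rw [hYval]
    by_cases h : ω ∈ Z n
    · rw [Set.indicator_of_mem h, hgval]
      have h1 : (0 : ℤ) ≤ S n ω := le_trans zero_le_one (hω n h)
      exact_mod_cast h1
    · rw [Set.indicator_of_notMem h]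
  -- L¹ bound
  have hY0 : Y 0 = fun _ => (x : ℝ) := by
    funext ω
    have hmem : ω ∈ Z 0 := by
      intro k hk
      rw [Nat.le_zero.mp hk, hS0 ω]
      exact_mod_cast hx.ne'
    rw [hYval, Set.indicator_of_mem hmem, hg0 ω]
  have hEYle : ∀ n, ∫ ω, Y n ω ∂P ≤ (x : ℝ) := by
    intro n
    have h1 : ∫ ω, Y n ω ∂P = ∫ ω, (P[Y n|ℱ 0]) ω ∂P :=
      (integral_condExp (ℱ.le 0)).symm
    have h2 : ∫ ω, (P[Y n|ℱ 0]) ω ∂P ≤ ∫ ω, Y 0 ω ∂P :=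
      integral_mono_ae integrable_condExp (hYint 0) (hsup.2.1 0 n (Nat.zero_le n))
    have h3 : ∫ ω, Y 0 ω ∂P = (x : ℝ) := by
      rw [hY0]; simp
    linarith
  have hbdd : ∀ n, eLpNorm ((-Y) n) 1 P ≤ (x : ℝ≥0) := by
    intro n
    have hneg : eLpNorm ((-Y) n) 1 P = eLpNorm (Y n) 1 P := eLpNorm_neg _ _ _
    rw [hneg, eLpNorm_one_eq_lintegral_enorm,
      ← ofReal_integral_norm_eq_lintegral_enorm (hYint n)]
    have h1 : ∫ ω, ‖Y n ω‖ ∂P ≤ (x : ℝ) := by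
      have heq : ∫ ω, ‖Y n ω‖ ∂P = ∫ ω, Y n ω ∂P := by
        refine integral_congr_ae ?_
        filter_upwards [hYnonneg] with ω hω
        rw [Real.norm_eq_abs, abs_of_nonneg (hω n)]
      rw [heq]; exact hEYle n
    calc ENNReal.ofReal (∫ ω, ‖Y n ω‖ ∂P) ≤ ENNReal.ofReal (x : ℝ) :=
          ENNReal.ofReal_le_ofReal h1
      _ = ((x : ℝ≥0) : ℝ≥0∞) := by
          rw [ENNReal.ofReal_natCast]; simp
  -- a.s. convergence of the stopped walk
  have hconv : ∀ᵐ ω ∂P, ∃ c, Tendsto (fun n => Y n ω) atTop (𝓝 c) := by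
    have h := hsup.neg.exists_ae_tendsto_of_bdd hbdd
    filter_upwards [h] with ω hω
    obtain ⟨c, hc⟩ := hω
    refine ⟨-c, ?_⟩
    have : (fun n => Y n ω) = fun n => -(((-Y) n) ω) := by
      funext n; simp
    rw [this]
    exact hc.neg
  -- conclusion
  have hfinal : ∀ᵐ ω ∂P, ∃ n, S n ω = 0 := by
    filter_upwards [hconv, hpm] with ω hc hω
    by_contra hno
    push_neg at hno
    have hmem : ∀ n, ω ∈ Z n := fun n k _ => hno k
    have hYeq : ∀ n, Y n ω = g n ω := fun n =>
      (hYval n ω).trans (Set.indicator_of_mem (hmem n) _)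
    obtain ⟨c, hc⟩ := hc
    have hcauchy : CauchySeq fun n => Y n ω := hc.cauchySeq
    obtain ⟨N, hN⟩ := Metric.cauchySeq_iff.mp hcauchy 1 one_pos
    have hd := hN (N + 1) (Nat.le_succ N) N le_rfl
    rw [Real.dist_eq, hYeq (N + 1), hYeq N, hgrec N ω] at hd
    have habs : |f (N + 1) ω| = 1 := by
      rw [hfval]
      rcases hω (N + 1) with h | h <;> rw [h] <;> norm_num
    rw [show g N ω + f (N + 1) ω - g N ω = f (N + 1) ω by ring] at hd
    linarith [habs ▸ hd]
  have hSmeas : ∀ n, Measurable (S n) := by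
    intro n
    induction n with
    | zero =>
      have : S 0 = fun _ => (x : ℤ) := funext hS0
      rw [this]; exact measurable_const
    | succ k ih =>
      have : S (k + 1) = fun ω => S k ω + X (k + 1) ω := funext (hSrec k)
      rw [this]; exact ih.add (hXmeas (k + 1))
  have hsetmeas : MeasurableSet {ω | ∃ n : ℕ, S n ω = 0} := by
    have : {ω | ∃ n : ℕ, S n ω = 0} = ⋃ n, (S n) ⁻¹' {0} := by
      ext ω; simp
    rw [this]
    exact MeasurableSet.iUnion fun n => hSmeas n (measurableSet_singleton 0)
  rw [← prob_compl_eq_zero_iff hsetmeas]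
  rw [ae_iff] at hfinal
  have : {ω | ∃ n : ℕ, S n ω = 0}ᶜ = {ω | ¬∃ n : ℕ, S n ω = 0} := by
    ext ω; simp
  rw [this]
  exact hfinal
end
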